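/- Let A be a commutative unital associative algebra and Δ : A → A a linear operator. Define the derived operations by the recursion: Φ¹_Δ(a) = Δ(a) − Δ(1)·a, and Φ^{r+1}_Δ(a₁,…,aᵣ,a_{r+1}) = Φ^r_Δ(a₁,…,aᵣ·a_{r+1}) − Φ^r_Δ(a₁,…,aᵣ)·a_{r+1} − aᵣ·Φ^r_Δ(a₁,…,a_{r-1},a_{r+1}). Then the bracket (a₁,…,aᵣ)_Δ := [···[[Δ, L_{a₁}], L_{a₂}],···, L_{aᵣ}](1) (where L_a denotes multiplication by a in End(A)) coincides with Φ^r_Δ; in particular the (r+1)-th bracket measures the failure of the r-th bracket to be a derivation in its last argument. -/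

import Mathlib

/-- The derived operations `Φ` of Koszul: `Phi Δ a rev` is `Φ^{r+1}(a₁,…,aᵣ,a)`
where `rev = [aᵣ,…,a₁]` is the list of earlier arguments in reverse order.
`Phi Δ a [] = Δ a − Δ 1 · a` and
`Φ^{r+1}(a₁,…,aᵣ,a) = Φ^r(a₁,…,aᵣ·a) − Φ^r(a₁,…,aᵣ)·a − aᵣ·Φ^r(a₁,…,a_{r-1},a)`. -/
def Phi {R A : Type*} [CommRing R] [CommRing A] [Algebra R A]
    (Δ : A →ₗ[R] A) : A → List A → A
  | a, [] => Δ a - Δ 1 * a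
  | a, x :: rest => Phi Δ (x * a) rest - Phi Δ x rest * a - x * Phi Δ a rest

lemma Phi_eq_aux {R A : Type*} [CommRing R] [CommRing A] [Algebra R A]
    (Δ : Module.End R A) : ∀ (rev : List A) (a : A),
    Phi Δ a rev =
      (List.foldl (fun (D : Module.End R A) (x : A) => ⁅D, LinearMap.mulLeft R x⁆) Δ
        rev.reverse) a
      - a * (List.foldl (fun (D : Module.End R A) (x : A) => ⁅D, LinearMap.mulLeft R x⁆) Δ
        rev.reverse) 1
  | [], a => by simp [Phi, mul_comm]
  | x :: rest, a => by
    set f := fun (D : Module.End R A) (y : A) => ⁅D, LinearMap.mulLeft R y⁆ with hf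
    set D' := List.foldl f Δ rest.reverse with hD'
    have hstep : List.foldl f Δ (x :: rest).reverse = ⁅D', LinearMap.mulLeft R x⁆ := by
      simp [hf, hD', List.reverse_cons, List.foldl_append]
    have hcomm : ∀ (E : Module.End R A) (y b : A),
        (⁅E, LinearMap.mulLeft R y⁆ : Module.End R A) b = E (y * b) - y * E b := by
      intro E y b
      simp [Ring.lie_def, LinearMap.mulLeft_apply]
    rw [hstep]
    show Phi Δ (x * a) rest - Phi Δ x rest * a - x * Phi Δ a rest = _
    rw [Phi_eq_aux Δ rest (x * a), Phi_eq_aux Δ rest x, Phi_eq_aux Δ rest a,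
      hcomm D' x a, hcomm D' x 1]
    rw [hD', hf]
    ring

/-- The Koszul–Akman higher antibracket `(a₁,…,aᵣ,a)_Δ`, obtained by evaluating the
iterated commutator `[···[[Δ,L_{a₁}],L_{a₂}],···,L_a]` at the unit, coincides with the
recursively defined derived operation `Φ`; in particular the `(r+1)`-th bracket measures
the failure of the `r`-th bracket to be a derivation in its last argument. -/
theorem antibracket_eq_Phi {R A : Type*} [CommRing R] [CommRing A] [Algebra R A]
    (Δ : Module.End R A) (l : List A) (a : A) :
    (List.foldl (fun (D : Module.End R A) (x : A) => ⁅D, LinearMap.mulLeft R x⁆) Δ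
        (l ++ [a])) 1 = Phi Δ a l.reverse := by
  rw [Phi_eq_aux Δ l.reverse a, List.reverse_reverse, List.foldl_append]
  simp [Ring.lie_def, LinearMap.mulLeft_apply, mul_comm]
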